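/- Let 1 ≤ p < ∞, let L ⊂ ℝ^d be a lattice, let R > 0, and let A ≥ 0 be an integer. If the total number of lattice vectors y ∈ L with ‖y‖_p ≤ R (including the zero vector) is at most 2A + 1, then every nonzero lattice vector has ℓ_p norm strictly greater than R/(A+1); that is, λ₁^{(p)}(L) > R/(A+1). -/

import Mathlib

open Real BigOperators

/-- The ℓ_p "norm" (for a real exponent `p`) of a vector in `ℝ^d`. -/
noncomputable def lpNorm (p : ℝ) {d : ℕ} (x : Fin d → ℝ) : ℝ :=
  (∑ i, |x i| ^ p) ^ (1 / p)

/-- The lattice generated by the vectors `B 0, …, B (m-1)`: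
the set of all integer linear combinations of the `B i`. -/
def latticeOf {d m : ℕ} (B : Fin m → Fin d → ℝ) : Set (Fin d → ℝ) :=
  {y | ∃ c : Fin m → ℤ, y = ∑ i, c i • B i}

lemma lpNorm_nonneg (p : ℝ) {d : ℕ} (x : Fin d → ℝ) : 0 ≤ lpNorm p x :=
  Real.rpow_nonneg (Finset.sum_nonneg fun i _ => Real.rpow_nonneg (abs_nonneg _) _) _

lemma lpNorm_smul (p : ℝ) (hp : 0 < p) {d : ℕ} (c : ℝ) (x : Fin d → ℝ) :
    lpNorm p (c • x) = |c| * lpNorm p x := by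
  unfold lpNorm
  have h1 : ∀ i : Fin d, |(c • x) i| ^ p = |c| ^ p * |x i| ^ p := by
    intro i
    simp only [Pi.smul_apply, smul_eq_mul, abs_mul]
    exact Real.mul_rpow (abs_nonneg _) (abs_nonneg _)
  rw [Finset.sum_congr rfl fun i _ => h1 i, ← Finset.mul_sum,
    Real.mul_rpow (Real.rpow_nonneg (abs_nonneg _) _)
      (Finset.sum_nonneg fun i _ => Real.rpow_nonneg (abs_nonneg _) _),
    ← Real.rpow_mul (abs_nonneg _), mul_one_div_cancel hp.ne', Real.rpow_one]

lemma coord_le_of_lpNorm_le (p : ℝ) (hp : 0 < p) {d : ℕ} {x : Fin d → ℝ} {R : ℝ}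
    (hR : 0 ≤ R) (h : lpNorm p x ≤ R) (i : Fin d) : |x i| ≤ R := by
  have hs : (0:ℝ) ≤ ∑ j, |x j| ^ p :=
    Finset.sum_nonneg fun j _ => Real.rpow_nonneg (abs_nonneg _) _
  have hsum : ∑ j, |x j| ^ p ≤ R ^ p := by
    have := Real.rpow_le_rpow (lpNorm_nonneg p x) h hp.le
    rwa [lpNorm, ← Real.rpow_mul hs, one_div_mul_cancel hp.ne', Real.rpow_one] at this
  have hxi : |x i| ^ p ≤ R ^ p := by
    refine le_trans ?_ hsum
    exact Finset.single_le_sum (fun j _ => Real.rpow_nonneg (abs_nonneg _) _) (Finset.mem_univ i)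
  exact (Real.rpow_le_rpow_iff (abs_nonneg _) hR hp).mp hxi


/-- Let `1 ≤ p < ∞`, let `L ⊂ ℝ^d` be a lattice, `R > 0`, and `A ≥ 0` an integer.
If the number of lattice vectors `y ∈ L` with `‖y‖_p ≤ R` (including `0`) is at most
`2A + 1`, then every nonzero lattice vector has ℓ_p norm strictly greater than
`R/(A+1)`, i.e., `λ₁^{(p)}(L) > R/(A+1)`. -/
theorem lambda1_gt_of_few_short_vectors (p : ℝ) (hp : 1 ≤ p) (d m : ℕ)
    (B : Fin m → Fin d → ℝ) (hB : LinearIndependent ℝ B) (R : ℝ) (hR : 0 < R) (A : ℕ)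
    (hcount : Nat.card {y : Fin d → ℝ // y ∈ latticeOf B ∧ lpNorm p y ≤ R} ≤ 2 * A + 1) :
    ∀ y ∈ latticeOf B, y ≠ 0 → R / ((A : ℝ) + 1) < lpNorm p y := by
  intro y hy hy0
  by_contra hle
  push_neg at hle
  have hppos : (0:ℝ) < p := lt_of_lt_of_le one_pos hp
  have hA1 : (0:ℝ) < (A:ℝ) + 1 := by positivity
  -- the set of short lattice vectors is finite
  set S := {y : Fin d → ℝ // y ∈ latticeOf B ∧ lpNorm p y ≤ R}
  have hBr : LinearIndepOn ℝ id (Set.range B) := hB.linearIndepOn_id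
  let bExt := Module.Basis.extend (s := Set.range B) hBr
  haveI := FiniteDimensional.fintypeBasisIndex bExt
  -- the ℤ-span of the extended basis is discrete and closed
  set Λ : Submodule ℤ (Fin d → ℝ) := Submodule.span ℤ (Set.range bExt) with hΛ
  haveI hdisc : DiscreteTopology Λ := by unfold Λ; infer_instance
  haveI : DiscreteTopology (Λ : Set (Fin d → ℝ)) := hdisc
  have hclosed : IsClosed (Λ : Set (Fin d → ℝ)) :=
    AddSubgroup.isClosed_of_discrete (H := Λ.toAddSubgroup)
  have hfin : Set.Finite (Metric.closedBall (0 : Fin d → ℝ) R ∩ (Λ : Set (Fin d → ℝ))) :=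
    Metric.finite_isBounded_inter_isClosed DiscreteTopology.isDiscrete Metric.isBounded_closedBall hclosed
  have hsub : latticeOf B ⊆ (Λ : Set (Fin d → ℝ)) := by
    rintro z ⟨c, rfl⟩
    refine Submodule.sum_mem _ fun i _ => Submodule.smul_mem _ _ ?_
    refine Submodule.subset_span ?_
    rw [Module.Basis.range_extend]
    exact LinearIndepOn.subset_extend hBr _ ⟨i, rfl⟩
  haveI hSfin : Finite S := by
    have : Set.Finite {y : Fin d → ℝ | y ∈ latticeOf B ∧ lpNorm p y ≤ R} := by
      refine hfin.subset ?_
      rintro z ⟨hz1, hz2⟩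
      refine ⟨mem_closedBall_zero_iff.mpr ?_, hsub hz1⟩
      exact (pi_norm_le_iff_of_nonneg hR.le).mpr fun i =>
        coord_le_of_lpNorm_le p hppos hR.le hz2 i
    exact this.to_subtype
  -- build 2A+3 distinct short lattice vectors from y
  have hmem : ∀ n : ℤ, n • y ∈ latticeOf B := by
    intro n
    obtain ⟨c, rfl⟩ := hy
    refine ⟨fun i => n * c i, ?_⟩
    rw [Finset.smul_sum]
    exact Finset.sum_congr rfl fun i _ => (mul_smul n (c i) (B i)).symm
  have hnorm : ∀ n : ℤ, |n| ≤ (A:ℤ) + 1 → lpNorm p (n • y) ≤ R := by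
    intro n hn
    have : (n : ℤ) • y = ((n : ℝ)) • y := (Int.cast_smul_eq_zsmul ℝ n y).symm
    rw [this, lpNorm_smul p hppos]
    have habs : |(n:ℝ)| ≤ (A:ℝ) + 1 := by
      rw [← Int.cast_abs]
      exact_mod_cast hn
    calc |(n:ℝ)| * lpNorm p y ≤ ((A:ℝ) + 1) * (R / ((A:ℝ) + 1)) :=
          mul_le_mul habs hle (lpNorm_nonneg p y) hA1.le
      _ = R := mul_div_cancel₀ R hA1.ne'
  let f : Fin (2 * A + 3) → S := fun k =>
    ⟨((k : ℤ) - ((A:ℤ) + 1)) • y, hmem _, hnorm _ (by have hk := k.isLt; rw [abs_le]; omega)⟩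
  have hfinj : Function.Injective f := by
    intro k k' hkk
    have h1 : ((k : ℤ) - ((A:ℤ) + 1)) • y = ((k' : ℤ) - ((A:ℤ) + 1)) • y :=
      congrArg Subtype.val hkk
    obtain ⟨i, hi⟩ : ∃ i, y i ≠ 0 := by
      by_contra hcon
      push_neg at hcon
      exact hy0 (funext hcon)
    have h2 := congrFun h1 i
    simp only [Pi.smul_apply, zsmul_eq_mul] at h2
    have h4 : ((k : ℤ) - ((A:ℤ) + 1)) = ((k' : ℤ) - ((A:ℤ) + 1)) :=
      Int.cast_injective (α := ℝ) (mul_right_cancel₀ hi h2)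
    have : (k : ℤ) = (k' : ℤ) := by omega
    exact Fin.ext (by exact_mod_cast this)
  have hcard : 2 * A + 3 ≤ Nat.card S := by
    have := Nat.card_le_card_of_injective f hfinj
    simpa using this
  omega
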